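/- For every n ≥ 0 and k ≥ 0, the generating-function coefficient identity holds: the sequence (C_n^(k))_{n≥0} is the (k+1)-fold convolution power of the Catalan sequence, i.e., the coefficient of x^n in c(x)^{k+1} equals C_n^(k), where c(x) = sum_{n≥0} C_n x^n is the Catalan number generating function. -/

import Mathlib

def gc (n k : ℕ) : ℚ := ((k : ℚ) + 1) / (2 * (n : ℚ) + (k : ℚ) + 1) * ((2 * n + k + 1).choose n : ℚ)

def cat (n : ℕ) : ℚ := 1 / ((n : ℚ) + 1) * ((2 * n).choose n : ℚ)

def Cond {n : ℕ} (u : Fin n → ℕ) : Prop :=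
  ∀ i j : Fin n, i < j →
    ¬(1 ≤ (u j : ℤ) - (((j : ℕ) : ℤ) - ((i : ℕ) : ℤ)) ∧
      (u j : ℤ) - (((j : ℕ) : ℤ) - ((i : ℕ) : ℤ)) ≤ (u i : ℤ) - 1)

lemma cat_eq (n : ℕ) : cat n = (catalan n : ℚ) := by
  have h := succ_mul_catalan_eq_centralBinom n
  have : ((n : ℚ) + 1) * (catalan n : ℚ) = ((2 * n).choose n : ℚ) := by
    exact_mod_cast congrArg (Nat.cast (R := ℚ)) h
  have hn : ((n : ℚ) + 1) ≠ 0 := by positivity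
  unfold cat
  field_simp
  linarith [this]

lemma gf : (PowerSeries.mk cat) = 1 + PowerSeries.X * (PowerSeries.mk cat) ^ 2 := by
  ext n
  cases n with
  | zero => simp [cat]
  | succ m =>
    rw [map_add, PowerSeries.coeff_succ_X_mul]
    simp only [PowerSeries.coeff_one, Nat.succ_ne_zero, if_false, zero_add]
    rw [sq, PowerSeries.coeff_mul, PowerSeries.coeff_mk]
    simp only [PowerSeries.coeff_mk]
    rw [cat_eq, catalan_succ']
    push_cast
    exact Finset.sum_congr rfl fun p _ => by rw [cat_eq, cat_eq]

-- factorial form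
lemma gc_eq (n k : ℕ) :
    gc n k = ((k : ℚ) + 1) * ((2 * n + k).factorial : ℚ) /
      ((n.factorial : ℚ) * ((n + k + 1).factorial : ℚ)) := by
  have hle : n ≤ 2 * n + k + 1 := by omega
  rw [gc, Nat.cast_choose ℚ hle]
  have h1 : 2 * n + k + 1 - n = n + k + 1 := by omega
  rw [h1]
  have h2 : ((2 * n + k + 1).factorial : ℚ) = (2 * (n:ℚ) + k + 1) * ((2 * n + k).factorial : ℚ) := by
    rw [Nat.factorial_succ]; push_cast; ring
  rw [h2]
  have hne : (2 * (n : ℚ) + k + 1) ≠ 0 := by positivity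
  have f1 : ((n.factorial : ℚ)) ≠ 0 := by exact_mod_cast n.factorial_ne_zero
  have f2 : (((n + k + 1).factorial : ℚ)) ≠ 0 := by exact_mod_cast (n + k + 1).factorial_ne_zero
  field_simp

lemma gc_zero (k : ℕ) : gc 0 k = 1 := by
  rw [gc_eq]
  have f2 : (((0 + k + 1).factorial : ℚ)) ≠ 0 := by exact_mod_cast (0 + k + 1).factorial_ne_zero
  simp only [Nat.cast_zero, mul_zero, zero_add, Nat.factorial_zero, Nat.factorial_succ]
  have f : ((k.factorial : ℚ)) ≠ 0 := by exact_mod_cast k.factorial_ne_zero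
  have h : ((k:ℚ)+1) ≠ 0 := by positivity
  push_cast
  field_simp

lemma gc_cat (n : ℕ) : gc n 0 = cat n := by
  rw [gc_eq, cat]
  have hle : n ≤ 2 * n := by omega
  rw [Nat.cast_choose ℚ hle]
  have h1 : 2 * n - n = n := by omega
  rw [h1]
  have h2 : ((n + 0 + 1).factorial : ℚ) = ((n : ℚ) + 1) * (n.factorial : ℚ) := by
    have : n + 0 + 1 = n + 1 := by omega
    rw [this, Nat.factorial_succ]; push_cast; ring
  rw [h2]
  have f1 : ((n.factorial : ℚ)) ≠ 0 := by exact_mod_cast n.factorial_ne_zero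
  have hn : ((n : ℚ) + 1) ≠ 0 := by positivity
  have : (2 * n + 0 : ℕ) = 2 * n := by omega
  rw [this]
  field_simp
  try ring
  try tauto

lemma gc_rec (n k : ℕ) : gc (n + 1) (k + 1) = gc (n + 1) k + gc n (k + 2) := by
  rw [gc_eq, gc_eq, gc_eq]
  have e1 : 2 * (n + 1) + (k + 1) = (2 * n + k + 2) + 1 := by omega
  have e2 : 2 * (n + 1) + k = 2 * n + k + 2 := by omega
  have e3 : 2 * n + (k + 2) = 2 * n + k + 2 := by omega
  have e4 : (n + 1) + (k + 1) + 1 = (n + k + 2) + 1 := by omega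
  have e5 : (n + 1) + k + 1 = n + k + 2 := by omega
  have e6 : n + (k + 2) + 1 = (n + k + 2) + 1 := by omega
  rw [e1, e2, e3, e4, e5, e6]
  have hf1 : (((2 * n + k + 2) + 1).factorial : ℚ) = (2*(n:ℚ)+k+3) * ((2 * n + k + 2).factorial : ℚ) := by
    rw [Nat.factorial_succ]; push_cast; ring
  have hf2 : (((n + k + 2) + 1).factorial : ℚ) = ((n:ℚ)+k+3) * ((n + k + 2).factorial : ℚ) := by
    rw [Nat.factorial_succ]; push_cast; ring
  have hf3 : ((n + 1).factorial : ℚ) = ((n:ℚ)+1) * (n.factorial : ℚ) := by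
    rw [Nat.factorial_succ]; push_cast; ring
  rw [hf1, hf2, hf3]
  have f1 : ((n.factorial : ℚ)) ≠ 0 := by exact_mod_cast n.factorial_ne_zero
  have f2 : (((n + k + 2).factorial : ℚ)) ≠ 0 := by exact_mod_cast (n + k + 2).factorial_ne_zero
  have f3 : (((2 * n + k + 2).factorial : ℚ)) ≠ 0 := by exact_mod_cast (2 * n + k + 2).factorial_ne_zero
  have h1 : ((n:ℚ)+1) ≠ 0 := by positivity
  have h2 : ((n:ℚ)+k+3) ≠ 0 := by positivity
  field_simp
  push_cast
  ring

theorem stmt2 (n k : ℕ) :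
    PowerSeries.coeff (R := ℚ) n ((PowerSeries.mk cat) ^ (k + 1)) = gc n k := by
  induction n generalizing k with
  | zero =>
    rw [gc_zero]
    have : PowerSeries.coeff (R := ℚ) 0 ((PowerSeries.mk cat) ^ (k + 1))
        = (PowerSeries.constantCoeff (R := ℚ) ((PowerSeries.mk cat))) ^ (k + 1) := by
      rw [PowerSeries.coeff_zero_eq_constantCoeff, map_pow]
    rw [this]
    have : PowerSeries.constantCoeff (R := ℚ) (PowerSeries.mk cat) = 1 := by
      simp [cat]
    rw [this, one_pow]
  | succ m ih =>
    induction k with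
    | zero => simpa [gc_cat] using rfl
    | succ j ihj =>
      have key : (PowerSeries.mk cat) ^ (j + 1 + 1)
          = (PowerSeries.mk cat) ^ (j + 1) + PowerSeries.X * (PowerSeries.mk cat) ^ (j + 2 + 1) := by
        calc (PowerSeries.mk cat) ^ (j + 1 + 1)
            = (PowerSeries.mk cat) ^ (j + 1) * (PowerSeries.mk cat) := by ring
          _ = (PowerSeries.mk cat) ^ (j + 1) * (1 + PowerSeries.X * (PowerSeries.mk cat) ^ 2) := by
              rw [← gf]
          _ = (PowerSeries.mk cat) ^ (j + 1) + PowerSeries.X * (PowerSeries.mk cat) ^ (j + 2 + 1) := by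
              ring
      rw [key, map_add, PowerSeries.coeff_succ_X_mul, ihj, ih (j + 2), gc_rec]
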